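/- Let A ∈ Mₙ(ℍ) be partitioned into four blocks A = [[A₁₁, A₁₂],[A₂₁, A₂₂]] with Aᵢⱼ of size nᵢ × nⱼ, n₁ + n₂ = n, and let Ã be the 2×2 real matrix whose (i,j) entry is ‖Aᵢⱼ‖₂. Then ‖A‖₂ ≤ ‖Ã‖₂. -/

import Mathlib

open scoped Matrix Quaternion BigOperators

noncomputable section

/-- Euclidean norm of a vector with entries in a normed ring (e.g. the quaternions). -/
def qVecNorm {R : Type*} [NormedRing R] {n : Type*} [Fintype n] (x : n → R) : ℝ :=
  Real.sqrt (∑ i, ‖x i‖ ^ 2)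

/-- Operator 2-norm (spectral norm) of a matrix over a normed ring. -/
def qSpecNorm {R : Type*} [NormedRing R] {m n : Type*} [Fintype m] [Fintype n]
    (A : Matrix m n R) : ℝ :=
  sSup {c : ℝ | ∃ x : n → R, x ≠ 0 ∧ c = qVecNorm (A.mulVec x) / qVecNorm x}

/-- `μ` is a right eigenvalue of the quaternionic matrix `A`. -/
def RightEig {n : Type*} [Fintype n] (A : Matrix n n ℍ[ℝ]) (μ : ℍ[ℝ]) : Prop :=
  ∃ x : n → ℍ[ℝ], x ≠ 0 ∧ A.mulVec x = fun i => x i * μ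

/-- Right spectral radius of a quaternionic matrix. -/
def rSpecRad {n : Type*} [Fintype n] (A : Matrix n n ℍ[ℝ]) : ℝ :=
  sSup {r : ℝ | ∃ μ : ℍ[ℝ], RightEig A μ ∧ r = ‖μ‖}

/-- Spectral radius of a real 2×2 matrix. -/
def realSpecRad (B : Matrix (Fin 2) (Fin 2) ℝ) : ℝ :=
  sSup {r : ℝ | ∃ μ ∈ spectrum ℝ B, r = |μ|}

section Aux

variable {R : Type*} [NormedRing R] {m n : Type*} [Fintype m] [Fintype n]

lemma qVecNorm_nonneg (x : n → R) : 0 ≤ qVecNorm x := Real.sqrt_nonneg _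

lemma qVecNorm_zero : qVecNorm (0 : n → R) = 0 := by simp [qVecNorm]

lemma qVecNorm_pos {x : n → R} (hx : x ≠ 0) : 0 < qVecNorm x := by
  rw [qVecNorm, Real.sqrt_pos]
  obtain ⟨i, hi⟩ := Function.ne_iff.1 hx
  exact lt_of_lt_of_le (pow_pos (norm_pos_iff.2 hi) 2)
    (Finset.single_le_sum (f := fun j => ‖x j‖ ^ 2) (fun j _ => sq_nonneg _) (Finset.mem_univ i))

lemma qVecNorm_sq (x : n → R) : qVecNorm x ^ 2 = ∑ i, ‖x i‖ ^ 2 :=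
  Real.sq_sqrt (Finset.sum_nonneg fun i _ => sq_nonneg _)

lemma qVecNorm_mulVec_le_frob (A : Matrix m n R) (x : n → R) :
    qVecNorm (A.mulVec x) ≤ Real.sqrt (∑ i, ∑ j, ‖A i j‖ ^ 2) * qVecNorm x := by
  rw [qVecNorm, qVecNorm, ← Real.sqrt_mul (by positivity)]
  apply Real.sqrt_le_sqrt
  rw [Finset.sum_mul]
  refine Finset.sum_le_sum fun i _ => ?_
  calc ‖A.mulVec x i‖ ^ 2 ≤ (∑ j, ‖A i j‖ * ‖x j‖) ^ 2 := by
        apply pow_le_pow_left₀ (norm_nonneg _)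
        refine le_trans ?_ (Finset.sum_le_sum fun j _ => norm_mul_le (A i j) (x j))
        exact (norm_sum_le _ _)
    _ ≤ (∑ j, ‖A i j‖ ^ 2) * ∑ j, ‖x j‖ ^ 2 :=
        Finset.sum_mul_sq_le_sq_mul_sq _ _ _

lemma qSpecSet_bddAbove (A : Matrix m n R) :
    BddAbove {c : ℝ | ∃ x : n → R, x ≠ 0 ∧ c = qVecNorm (A.mulVec x) / qVecNorm x} := by
  refine ⟨Real.sqrt (∑ i, ∑ j, ‖A i j‖ ^ 2), ?_⟩
  rintro c ⟨x, hx, rfl⟩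
  rw [div_le_iff₀ (qVecNorm_pos hx)]
  exact qVecNorm_mulVec_le_frob A x

lemma qSpecNorm_nonneg (A : Matrix m n R) : 0 ≤ qSpecNorm A :=
  Real.sSup_nonneg (by
    rintro c ⟨x, hx, rfl⟩
    exact div_nonneg (qVecNorm_nonneg _) (qVecNorm_nonneg _))

lemma qVecNorm_mulVec_le (A : Matrix m n R) (x : n → R) :
    qVecNorm (A.mulVec x) ≤ qSpecNorm A * qVecNorm x := by
  by_cases hx : x = 0
  · simp [hx, Matrix.mulVec_zero, qVecNorm_zero]
  · have h : qVecNorm (A.mulVec x) / qVecNorm x ≤ qSpecNorm A :=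
      le_csSup (qSpecSet_bddAbove A) ⟨x, hx, rfl⟩
    rwa [div_le_iff₀ (qVecNorm_pos hx)] at h

lemma real_sqrt_tri (f g : n → ℝ) :
    Real.sqrt (∑ i, (f i + g i) ^ 2) ≤
      Real.sqrt (∑ i, f i ^ 2) + Real.sqrt (∑ i, g i ^ 2) := by
  have h := norm_add_le (E := EuclideanSpace ℝ n) (WithLp.toLp 2 f) (WithLp.toLp 2 g)
  simpa [EuclideanSpace.norm_eq, Real.norm_eq_abs, sq_abs] using h

lemma qVecNorm_add_le (u v : n → R) : qVecNorm (u + v) ≤ qVecNorm u + qVecNorm v := by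
  refine le_trans ?_ (real_sqrt_tri (fun i => ‖u i‖) (fun i => ‖v i‖))
  apply Real.sqrt_le_sqrt
  exact Finset.sum_le_sum fun i _ => pow_le_pow_left₀ (norm_nonneg _) (norm_add_le _ _) 2

end Aux

theorem specNorm_fromBlocks_le (n₁ n₂ : ℕ)
    (A11 : Matrix (Fin n₁) (Fin n₁) ℍ[ℝ]) (A12 : Matrix (Fin n₁) (Fin n₂) ℍ[ℝ])
    (A21 : Matrix (Fin n₂) (Fin n₁) ℍ[ℝ]) (A22 : Matrix (Fin n₂) (Fin n₂) ℍ[ℝ]) :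
    qSpecNorm (Matrix.fromBlocks A11 A12 A21 A22) ≤
      qSpecNorm !![qSpecNorm A11, qSpecNorm A12; qSpecNorm A21, qSpecNorm A22] := by
  set B : Matrix (Fin 2) (Fin 2) ℝ :=
    !![qSpecNorm A11, qSpecNorm A12; qSpecNorm A21, qSpecNorm A22] with hB
  apply Real.sSup_le
  · rintro c ⟨x, hx, rfl⟩
    set x₁ : Fin n₁ → ℍ[ℝ] := x ∘ Sum.inl with hx1
    set x₂ : Fin n₂ → ℍ[ℝ] := x ∘ Sum.inr with hx2
    set a := qVecNorm x₁ with ha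
    set b := qVecNorm x₂ with hb
    set y : Fin 2 → ℝ := ![a, b] with hy
    have ha0 : 0 ≤ a := qVecNorm_nonneg _
    have hb0 : 0 ≤ b := qVecNorm_nonneg _
    have s110 := qSpecNorm_nonneg A11
    have s120 := qSpecNorm_nonneg A12
    have s210 := qSpecNorm_nonneg A21
    have s220 := qSpecNorm_nonneg A22
    -- norm of x equals norm of y
    have hxy : qVecNorm x = qVecNorm y := by
      rw [qVecNorm, qVecNorm, Fintype.sum_sum_type]
      congr 1
      rw [Fin.sum_univ_two]
      simp only [hy, Matrix.cons_val_zero, Matrix.cons_val_one, Matrix.head_cons,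
        Real.norm_eq_abs, sq_abs]
      rw [ha, hb, qVecNorm_sq, qVecNorm_sq]
      rfl
    -- the block mulVec
    rw [Matrix.fromBlocks_mulVec]
    -- compute B.mulVec y
    have hBy : B.mulVec y = ![qSpecNorm A11 * a + qSpecNorm A12 * b,
        qSpecNorm A21 * a + qSpecNorm A22 * b] := by
      funext i
      fin_cases i <;>
        simp [Matrix.mulVec, dotProduct, Fin.sum_univ_two, hy, hB]
    have h1 : qVecNorm (A11.mulVec x₁ + A12.mulVec x₂) ≤ qSpecNorm A11 * a + qSpecNorm A12 * b :=
      le_trans (qVecNorm_add_le _ _)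
        (add_le_add (qVecNorm_mulVec_le _ _) (qVecNorm_mulVec_le _ _))
    have h2 : qVecNorm (A21.mulVec x₁ + A22.mulVec x₂) ≤ qSpecNorm A21 * a + qSpecNorm A22 * b :=
      le_trans (qVecNorm_add_le _ _)
        (add_le_add (qVecNorm_mulVec_le _ _) (qVecNorm_mulVec_le _ _))
    have key : qVecNorm (Sum.elim (A11.mulVec x₁ + A12.mulVec x₂)
        (A21.mulVec x₁ + A22.mulVec x₂) : Fin n₁ ⊕ Fin n₂ → ℍ[ℝ]) ≤ qVecNorm (B.mulVec y) := by
      rw [qVecNorm, qVecNorm, hBy]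
      apply Real.sqrt_le_sqrt
      rw [Fintype.sum_sum_type, Fin.sum_univ_two]
      simp only [Sum.elim_inl, Sum.elim_inr, Matrix.cons_val_zero, Matrix.cons_val_one,
        Matrix.head_cons, Real.norm_eq_abs, sq_abs]
      have e1 : ∑ i, ‖(A11.mulVec x₁ + A12.mulVec x₂) i‖ ^ 2 =
          qVecNorm (A11.mulVec x₁ + A12.mulVec x₂) ^ 2 := (qVecNorm_sq _).symm
      have e2 : ∑ i, ‖(A21.mulVec x₁ + A22.mulVec x₂) i‖ ^ 2 =
          qVecNorm (A21.mulVec x₁ + A22.mulVec x₂) ^ 2 := (qVecNorm_sq _).symm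
      rw [e1, e2]
      exact add_le_add
        (pow_le_pow_left₀ (qVecNorm_nonneg _) h1 2)
        (pow_le_pow_left₀ (qVecNorm_nonneg _) h2 2)
    rw [div_le_iff₀ (qVecNorm_pos hx)]
    calc qVecNorm (Sum.elim (A11.mulVec x₁ + A12.mulVec x₂)
          (A21.mulVec x₁ + A22.mulVec x₂) : Fin n₁ ⊕ Fin n₂ → ℍ[ℝ])
        ≤ qVecNorm (B.mulVec y) := key
      _ ≤ qSpecNorm B * qVecNorm y := qVecNorm_mulVec_le _ _
      _ = qSpecNorm B * qVecNorm x := by rw [hxy]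
  · exact qSpecNorm_nonneg _
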